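/- If a finite graph G has no clique on s+2 vertices, then every chordal subgraph H of G on n vertices has at most s·n edges. -/

import Mathlib

namespace Stmt18Aux

variable {V : Type*}

/-- `f` is a walk of length `n` in `H` (as a function on indices). -/
def IsChain (H : SimpleGraph V) (f : ℕ → V) (n : ℕ) : Prop :=
  ∀ i < n, H.Adj (f i) (f (i + 1))

/-- Reachability avoiding the set `S`. -/
def Reach (H : SimpleGraph V) (S : Set V) (x y : V) : Prop :=
  ∃ f n, IsChain H f n ∧ f 0 = x ∧ f n = y ∧ ∀ i ≤ n, f i ∉ S

lemma Reach.refl {H : SimpleGraph V} {S : Set V} {x : V} (hx : x ∉ S) : Reach H S x x :=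
  ⟨fun _ => x, 0, fun i hi => absurd hi (Nat.not_lt_zero i), rfl, rfl, fun _ _ => hx⟩

lemma Reach.symm {H : SimpleGraph V} {S : Set V} {x y : V} (h : Reach H S x y) :
    Reach H S y x := by
  obtain ⟨f, n, hc, h0, hn, hS⟩ := h
  refine ⟨fun k => f (n - k), n, fun i hi => ?_, by simp [hn], by simp [h0], fun i hi => hS _ (Nat.sub_le _ _)⟩
  show H.Adj (f (n - i)) (f (n - (i+1)))
  have h1 : n - i = (n - (i+1)) + 1 := by omega
  rw [h1]
  exact (hc (n - (i+1)) (by omega)).symm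

lemma Reach.trans {H : SimpleGraph V} {S : Set V} {x y z : V}
    (h1 : Reach H S x y) (h2 : Reach H S y z) : Reach H S x z := by
  obtain ⟨f, n, hc, hf0, hfn, hfS⟩ := h1
  obtain ⟨g, m, hg, hg0, hgm, hgS⟩ := h2
  refine ⟨fun k => if k < n then f k else g (k - n), n + m, fun i hi => ?_, ?_, ?_, fun i hi => ?_⟩
  · by_cases h : i + 1 < n
    · simp only [if_pos (by omega : i < n), if_pos h]
      exact hc i (by omega)
    · by_cases h' : i < n
      · have e : g (i + 1 - n) = f (i + 1) := by
          rw [show i + 1 - n = 0 by omega, hg0, ← hfn, show n = i + 1 by omega]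
        simp only [if_pos h', if_neg (by omega : ¬ i + 1 < n), e]
        exact hc i (by omega)
      · simp only [if_neg h', if_neg (by omega : ¬ i + 1 < n)]
        have : i + 1 - n = (i - n) + 1 := by omega
        rw [this]
        exact hg (i - n) (by omega)
  · by_cases h : 0 < n
    · simp [h, hf0]
    · simp only [if_neg (by omega : ¬ (0:ℕ) < n)]
      have : n = 0 := by omega
      simp [this, hg0, ← hfn, ← hf0, this]
  · simp only [if_neg (by omega : ¬ n + m < n)]
    simpa using hgm
  · by_cases h : i < n
    · simpa [h] using hfS i (by omega)
    · simpa [h] using hgS (i - n) (by omega)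

lemma Reach.extend {H : SimpleGraph V} {S : Set V} {x y z : V}
    (h1 : Reach H S x y) (hadj : H.Adj y z) (hz : z ∉ S) : Reach H S x z := by
  refine h1.trans ⟨fun k => if k = 0 then y else z, 1, ?_, rfl, rfl, ?_⟩
  · intro i hi
    have : i = 0 := by omega
    simpa [this] using hadj
  · intro i hi
    have := h1
    obtain ⟨f, n, -, -, hfn, hfS⟩ := this
    by_cases h : i = 0
    · simpa [h, ← hfn] using hfS n le_rfl
    · simpa [h] using hz

/-- Every vertex on a chain witnessing reachability is itself reachable. -/
lemma Reach.of_chain {H : SimpleGraph V} {S : Set V} {f : ℕ → V} {n : ℕ}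
    (hc : IsChain H f n) (hS : ∀ i ≤ n, f i ∉ S) {k : ℕ} (hk : k ≤ n) :
    Reach H S (f 0) (f k) :=
  ⟨f, k, fun i hi => hc i (by omega), rfl, rfl, fun i hi => hS i (by omega)⟩


def ChainIn (H : SimpleGraph V) (A : Set V) (x y : V) (f : ℕ → V) (n : ℕ) : Prop :=
  IsChain H f n ∧ f 0 = x ∧ f n = y ∧ ∀ i, 0 < i → i < n → f i ∈ A

lemma exists_min_chain {H : SimpleGraph V} {A : Set V} {x y : V}
    (hxy : x ≠ y) (hnadj : ¬H.Adj x y) (hne : ∃ f n, ChainIn H A x y f n) :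
    ∃ f n, ChainIn H A x y f n ∧ 2 ≤ n ∧
      (∀ i j, i < j → j ≤ n → f i ≠ f j) ∧
      (∀ i j, i < j → j ≤ n → H.Adj (f i) (f j) → j = i + 1) := by
  classical
  have hP : ∃ n, ∃ f, ChainIn H A x y f n := by
    obtain ⟨f, n, h⟩ := hne; exact ⟨n, f, h⟩
  set n := Nat.find hP with hn_def
  obtain ⟨f, hf⟩ := Nat.find_spec hP
  have hmin : ∀ m, m < n → ¬ ∃ g, ChainIn H A x y g m := fun m hm => Nat.find_min hP hm
  obtain ⟨hc, hf0, hfn, hA⟩ := hf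
  have hn1 : 1 ≤ n := by
    rcases Nat.eq_zero_or_pos n with h | h
    · exact absurd (hf0.symm.trans (by rw [← h, hfn])) hxy
    · exact h
  have hn2 : 2 ≤ n := by
    rcases Nat.lt_or_ge n 2 with h | h
    · have h1 : n = 1 := by omega
      have h2 := hc 0 (by omega)
      rw [hf0, show (0:ℕ)+1 = n by omega, hfn] at h2
      exact absurd h2 hnadj
    · exact h
  have hinj : ∀ i j, i < j → j ≤ n → f i ≠ f j := by
    intro i j hij hjn heq
    refine hmin (n - (j - i)) (by omega) ⟨fun k => if k < i then f k else f (k + (j - i)), ?_, ?_, ?_, ?_⟩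
    · intro k hk
      by_cases h1 : k + 1 < i
      · simp only [if_pos (by omega : k < i), if_pos h1]
        exact hc k (by omega)
      · by_cases h2 : k < i
        · have e : f (k + 1 + (j - i)) = f (k + 1) := by
            rw [show k + 1 + (j - i) = j by omega, ← heq, show i = k + 1 by omega]
          simp only [if_pos h2, if_neg h1, e]
          exact hc k (by omega)
        · simp only [if_neg h2, if_neg (by omega : ¬ k + 1 < i),
            show k + 1 + (j - i) = (k + (j - i)) + 1 by omega]
          exact hc (k + (j - i)) (by omega)
    · by_cases h : 0 < i
      · simpa [h] using hf0
      · have hi0 : i = 0 := by omega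
        subst hi0
        simp only [if_neg (lt_irrefl 0), show 0 + (j - 0) = j by omega, ← heq, hf0]
    · simp only [if_neg (by omega : ¬ n - (j - i) < i),
        show n - (j - i) + (j - i) = n by omega, hfn]
      exact hfn
    · intro k hk0 hk
      by_cases h : k < i
      · simpa [h] using hA k hk0 (by omega)
      · simpa [h] using hA (k + (j - i)) (by omega) (by omega)
  have hchord : ∀ i j, i < j → j ≤ n → H.Adj (f i) (f j) → j = i + 1 := by
    intro i j hij hjn hadj
    by_contra hne2
    have hij2 : i + 2 ≤ j := by omega
    refine hmin (n - (j - i - 1)) (by omega)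
      ⟨fun k => if k ≤ i then f k else f (k + (j - i - 1)), ?_, ?_, ?_, ?_⟩
    · intro k hk
      by_cases h1 : k + 1 ≤ i
      · simp only [if_pos (by omega : k ≤ i), if_pos h1]
        exact hc k (by omega)
      · by_cases h2 : k ≤ i
        · simp only [show k = i by omega, if_pos (le_refl i), if_neg (by omega : ¬ i + 1 ≤ i),
            show i + 1 + (j - i - 1) = j by omega]
          exact hadj
        · simp only [if_neg h2, if_neg (by omega : ¬ k + 1 ≤ i),
            show k + 1 + (j - i - 1) = (k + (j - i - 1)) + 1 by omega]
          exact hc (k + (j - i - 1)) (by omega)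
    · simpa using hf0
    · simp only [if_neg (by omega : ¬ n - (j - i - 1) ≤ i),
        show n - (j - i - 1) + (j - i - 1) = n by omega, hfn]
      exact hfn
    · intro k hk0 hk
      by_cases h : k ≤ i
      · simpa [h] using hA k hk0 (by omega)
      · simpa [h] using hA (k + (j - i - 1)) (by omega) (by omega)
  exact ⟨f, n, ⟨hc, hf0, hfn, hA⟩, hn2, hinj, hchord⟩

lemma fin_sub_eq_one_iff {n : ℕ} {i j : Fin (n + 2)} :
    j - i = 1 ↔ (j.val = i.val + 1 ∨ (j.val = 0 ∧ i.val = n + 1)) := by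
  have hi := i.isLt
  have hj := j.isLt
  rw [Fin.sub_def]
  constructor
  · intro h
    have hval : (n + 2 - i.val + j.val) % (n + 2) = 1 := by
      have := congrArg Fin.val h
      simpa using this
    by_cases hlt : n + 2 - i.val + j.val < n + 2
    · rw [Nat.mod_eq_of_lt hlt] at hval
      omega
    · rw [Nat.mod_eq_sub_mod (by omega), Nat.mod_eq_of_lt (by omega)] at hval
      omega
  · intro h
    apply Fin.ext
    show (n + 2 - i.val + j.val) % (n + 2) = (1 : Fin (n + 2)).val
    rw [Fin.val_one]
    rcases h with h | ⟨h0, h1⟩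
    · rw [h, show n + 2 - i.val + (i.val + 1) = (n + 2) + 1 by omega,
        Nat.add_mod_left, Nat.mod_eq_of_lt (by omega)]
    · rw [h0, h1, show n + 2 - (n + 1) + 0 = 1 by omega, Nat.mod_eq_of_lt (by omega)]

lemma cycle_embedding (H : SimpleGraph V) {m : ℕ} (hm : 4 ≤ m) (F : ℕ → V)
    (hadj : ∀ k < m, H.Adj (F k) (F (k + 1))) (hFm : F m = F 0)
    (hinj : ∀ i j, i < j → j < m → F i ≠ F j)
    (hchord : ∀ i j, i < j → j < m → H.Adj (F i) (F j) → j = i + 1 ∨ (i = 0 ∧ j = m - 1)) :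
    Nonempty (SimpleGraph.cycleGraph m ↪g H) := by
  obtain ⟨n, rfl⟩ : ∃ n, m = n + 2 := ⟨m - 2, by omega⟩
  have ginj : Function.Injective (fun i : Fin (n + 2) => F i.val) := by
    intro i j h
    simp only at h
    rcases lt_trichotomy i.val j.val with hlt | heq | hgt
    · exact absurd h (hinj _ _ hlt j.isLt)
    · exact Fin.ext heq
    · exact absurd h.symm (hinj _ _ hgt i.isLt)
  -- adjacency in one direction, for i < j
  have fwd : ∀ i j : Fin (n + 2), i.val < j.val → H.Adj (F i.val) (F j.val) →
      (SimpleGraph.cycleGraph (n + 2)).Adj i j := by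
    intro i j hlt hAdj
    rw [SimpleGraph.cycleGraph_adj]
    rcases hchord i.val j.val hlt j.isLt hAdj with h | ⟨h0, h1⟩
    · right; exact fin_sub_eq_one_iff.mpr (Or.inl h)
    · left; exact fin_sub_eq_one_iff.mpr (Or.inr ⟨h0, by omega⟩)
  refine ⟨⟨⟨fun i => F i.val, ginj⟩, ?_⟩⟩
  intro i j
  simp only [Function.Embedding.coeFn_mk]
  constructor
  · intro hAdj
    rcases lt_trichotomy i.val j.val with hlt | heq | hgt
    · exact fwd i j hlt hAdj
    · exact absurd (Fin.ext heq : i = j) (fun h => (h ▸ hAdj).ne rfl)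
    · exact (fwd j i hgt hAdj.symm).symm
  · intro hAdj
    rw [SimpleGraph.cycleGraph_adj] at hAdj
    have key : ∀ p q : Fin (n + 2), q - p = 1 → H.Adj (F p.val) (F q.val) := by
      intro p q hpq
      rcases fin_sub_eq_one_iff.mp hpq with h | ⟨h0, h1⟩
      · rw [h]; exact hadj p.val (by omega)
      · rw [h0, h1, ← hFm]
        exact hadj (n + 1) (by omega)
    rcases hAdj with h | h
    · exact (key j i h).symm
    · exact key i j h

def Chordal (H : SimpleGraph V) : Prop :=
  ∀ m : ℕ, 4 ≤ m → IsEmpty (SimpleGraph.cycleGraph m ↪g H)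

/-- Two internally-disjoint, non-adjacent "sides" cannot both connect two
non-adjacent vertices in a chordal graph. -/
lemma no_two_chains {H : SimpleGraph V} (hch : Chordal H) {A B : Set V} {x y : V}
    (hxy : x ≠ y) (hnadj : ¬H.Adj x y)
    (hdisj : ∀ u ∈ A, ∀ w ∈ B, u ≠ w ∧ ¬H.Adj u w) (hxB : x ∉ B)
    (hA : ∃ f n, ChainIn H A x y f n) (hB : ∃ f n, ChainIn H B y x f n) : False := by
  obtain ⟨p, np, ⟨hcp, hp0, hpn, hpA⟩, hnp2, hpinj, hpchord⟩ := exists_min_chain hxy hnadj hA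
  obtain ⟨q, nq, ⟨hcq, hq0, hqn, hqB⟩, hnq2, hqinj, hqchord⟩ :=
    exists_min_chain (Ne.symm hxy) (fun h => hnadj h.symm) hB
  set m := np + nq with hm_def
  have hm : 4 ≤ m := by omega
  set F : ℕ → V := fun k => if k < np then p k else q (k - np) with hF_def
  have hFp : ∀ k ≤ np, F k = p k := by
    intro k hk
    by_cases h : k < np
    · simp [hF_def, h]
    · have hk_eq : k = np := by omega
      simp only [hF_def, if_neg h, hk_eq, Nat.sub_self, hq0, hpn]
      simp
  have hFq : ∀ k, np ≤ k → F k = q (k - np) := by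
    intro k hk
    by_cases h : k < np
    · exact absurd h (by omega)
    · simp [hF_def, h]
  have hF0 : F 0 = x := by rw [hFp 0 (by omega), hp0]
  have hFm : F m = F 0 := by rw [hFq m (by omega), hF0, show m - np = nq by omega, hqn]
  have hadj : ∀ k < m, H.Adj (F k) (F (k + 1)) := by
    intro k hk
    by_cases h : k + 1 ≤ np
    · rw [hFp k (by omega), hFp (k + 1) h]
      exact hcp k (by omega)
    · rw [hFq k (by omega), hFq (k + 1) (by omega), show k + 1 - np = (k - np) + 1 by omega]
      exact hcq (k - np) (by omega)
  have hinj : ∀ i j, i < j → j < m → F i ≠ F j := by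
    intro i j hij hjm
    by_cases hj : j ≤ np
    · rw [hFp i (by omega), hFp j hj]
      exact hpinj i j hij hj
    · by_cases hi : np ≤ i
      · rw [hFq i hi, hFq j (by omega)]
        intro h
        exact hqinj (i - np) (j - np) (by omega) (by omega) h
      · -- i < np < j
        rw [hFp i (by omega), hFq j (by omega)]
        have hqB' : q (j - np) ∈ B := hqB (j - np) (by omega) (by omega)
        by_cases hi0 : i = 0
        · subst hi0
          rw [hp0]
          intro h
          exact hxB (h ▸ hqB')
        · have hpA' : p i ∈ A := hpA i (by omega) (by omega)
          exact (hdisj _ hpA' _ hqB').1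
  have hchord : ∀ i j, i < j → j < m → H.Adj (F i) (F j) → j = i + 1 ∨ (i = 0 ∧ j = m - 1) := by
    intro i j hij hjm hAdj
    by_cases hj : j ≤ np
    · rw [hFp i (by omega), hFp j hj] at hAdj
      exact Or.inl (hpchord i j hij hj hAdj)
    · by_cases hi : np ≤ i
      · rw [hFq i hi, hFq j (by omega)] at hAdj
        have := hqchord (i - np) (j - np) (by omega) (by omega) hAdj
        omega
      · rw [hFp i (by omega), hFq j (by omega)] at hAdj
        have hqB' : q (j - np) ∈ B := hqB (j - np) (by omega) (by omega)
        by_cases hi0 : i = 0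
        · subst hi0
          rw [hp0] at hAdj
          have : H.Adj (q (j - np)) (q nq) := by rw [hqn]; exact hAdj.symm
          have := hqchord (j - np) nq (by omega) le_rfl this
          omega
        · have hpA' : p i ∈ A := hpA i (by omega) (by omega)
          exact absurd hAdj (hdisj _ hpA' _ hqB').2
  obtain ⟨e⟩ := cycle_embedding H hm F hadj hFm hinj hchord
  exact (hch m hm).false e

def Simplicial (H : SimpleGraph V) (v : V) : Prop :=
  ∀ x y, H.Adj v x → H.Adj v y → x ≠ y → H.Adj x y

lemma chordal_induce {H : SimpleGraph V} (hch : Chordal H) (W : Set V) :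
    Chordal (H.induce W) := fun m hm =>
  ⟨fun e => (hch m hm).false ((SimpleGraph.Embedding.induce W).comp e)⟩

universe u

theorem dirac_aux : ∀ N : ℕ, ∀ {V : Type u} [Fintype V] (H : SimpleGraph V),
    Nat.card V ≤ N → Chordal H →
    (∀ v w : V, v ≠ w → H.Adj v w) ∨
      ∃ v w, v ≠ w ∧ ¬H.Adj v w ∧ Simplicial H v ∧ Simplicial H w := by
  intro N
  induction N with
  | zero =>
    intro V _ H hcard _
    left
    intro v w _
    haveI : Nonempty V := ⟨v⟩
    have : 0 < Nat.card V := Nat.card_pos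
    omega
  | succ N IH =>
    intro V _ H hcard hch
    classical
    by_cases hcomp : ∀ v w : V, v ≠ w → H.Adj v w
    · exact Or.inl hcomp
    right
    push_neg at hcomp
    obtain ⟨a, b, hab_ne, hab_nadj⟩ := hcomp
    set SepP : Finset V → Prop := fun S => a ∉ S ∧ b ∉ S ∧ ¬ Reach H ↑S a b with hSepP
    have hsep0 : SepP ((Finset.univ.erase a).erase b) := by
      refine ⟨by simp, by simp [hab_ne.symm], ?_⟩
      rintro ⟨f, n, hc, hf0, hfn, hS⟩
      have hmem : ∀ i ≤ n, f i = a ∨ f i = b := by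
        intro i hi
        have h := hS i hi
        simp only [Finset.coe_erase, Set.mem_diff, Finset.coe_univ, Set.mem_univ,
          Set.mem_singleton_iff, true_and, not_and, not_not] at h
        tauto
      have hn1 : 1 ≤ n := by
        by_contra h
        have hn0 : n = 0 := by omega
        rw [hn0, hf0] at hfn
        exact hab_ne hfn
      have hadj01 := hc 0 (by omega)
      rw [hf0] at hadj01
      have hf1 : f 1 = b := by
        rcases hmem 1 (by omega) with h | h
        · exact absurd (h ▸ hadj01) (H.irrefl)
        · exact h
      rw [hf1] at hadj01
      exact hab_nadj hadj01
    obtain ⟨S, hS_mem, hS_min⟩ := Finset.exists_min_image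
      (Finset.univ.filter SepP) Finset.card
      ⟨_, Finset.mem_filter.mpr ⟨Finset.mem_univ _, hsep0⟩⟩
    rw [Finset.mem_filter] at hS_mem
    obtain ⟨-, haS, hbS, hSepS⟩ := hS_mem
    set A : Set V := {v | Reach H ↑S a v} with hA_def
    set B : Set V := {v | Reach H ↑S b v} with hB_def
    have haS' : a ∉ (↑S : Set V) := by simpa using haS
    have hbS' : b ∉ (↑S : Set V) := by simpa using hbS
    have haA : a ∈ A := Reach.refl haS'
    have hbB : b ∈ B := Reach.refl hbS'
    have hA_not_S : ∀ v ∈ A, v ∉ (↑S : Set V) := by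
      rintro v ⟨f, n, hc, h0, hn, hSf⟩
      exact hn ▸ hSf n le_rfl
    have hB_not_S : ∀ v ∈ B, v ∉ (↑S : Set V) := by
      rintro v ⟨f, n, hc, h0, hn, hSf⟩
      exact hn ▸ hSf n le_rfl
    have hAB_disj : ∀ v, v ∈ A → v ∈ B → False := fun v hvA hvB => hSepS (hvA.trans hvB.symm)
    have hA_closed : ∀ v ∈ A, ∀ w, H.Adj v w → w ∉ (↑S : Set V) → w ∈ A :=
      fun v hv w hadj hw => hv.extend hadj hw
    have hB_closed : ∀ v ∈ B, ∀ w, H.Adj v w → w ∉ (↑S : Set V) → w ∈ B :=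
      fun v hv w hadj hw => hv.extend hadj hw
    have hA_B_no : ∀ u ∈ A, ∀ w ∈ B, u ≠ w ∧ ¬H.Adj u w := by
      intro u hu w hw
      refine ⟨fun h => hAB_disj u hu (h ▸ hw), fun hadj => ?_⟩
      exact hAB_disj w (hA_closed u hu w hadj (hB_not_S w hw)) hw
    -- every vertex of S has neighbours on both sides
    have hSnbr : ∀ x ∈ S, (∃ u ∈ A, H.Adj x u) ∧ (∃ u ∈ B, H.Adj x u) := by
      intro x hxS
      have hxS' : x ∈ (↑S : Set V) := by simpa using hxS
      have hcard_lt : (S.erase x).card < S.card := Finset.card_erase_lt_of_mem hxS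
      have hnotsep : ¬ SepP (S.erase x) := by
        intro h
        have := hS_min _ (Finset.mem_filter.mpr ⟨Finset.mem_univ _, h⟩)
        omega
      have hreach : Reach H ↑(S.erase x) a b := by
        by_contra h
        exact hnotsep ⟨fun h' => haS (Finset.mem_of_mem_erase h'),
          fun h' => hbS (Finset.mem_of_mem_erase h'), h⟩
      have side : ∀ (c d : V), c ∉ (↑S : Set V) → Reach H ↑(S.erase x) c d →
          ¬ Reach H ↑S c d → ∃ u, H.Adj x u ∧ Reach H ↑S c u := by
        rintro c d hcS ⟨f, n, hc, hf0, hfn, havoid⟩ hnr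
        have hx_occ : ∃ i, i ≤ n ∧ f i = x := by
          by_contra h
          push_neg at h
          refine hnr ⟨f, n, hc, hf0, hfn, fun i hi hmem => ?_⟩
          exact havoid i hi (by
            simp only [Finset.coe_erase, Set.mem_diff, Set.mem_singleton_iff]
            exact ⟨hmem, h i hi⟩)
        have hi0 := Nat.find_spec hx_occ
        set i0 := Nat.find hx_occ with hi0_def
        have hi0_min : ∀ i < i0, ¬(i ≤ n ∧ f i = x) := fun i hi => Nat.find_min hx_occ hi
        have hi0_pos : 1 ≤ i0 := by
          rcases Nat.eq_zero_or_pos i0 with h | h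
          · rw [h] at hi0
            exact absurd (show c ∈ (↑S : Set V) by rw [← hf0, hi0.2]; exact hxS') hcS
          · exact h
        refine ⟨f (i0 - 1), ?_, ?_⟩
        · have := hc (i0 - 1) (by omega)
          rw [show i0 - 1 + 1 = i0 by omega, hi0.2] at this
          exact this.symm
        · refine ⟨f, i0 - 1, fun i hi => hc i (by omega), hf0, rfl, fun i hi => ?_⟩
          have h1 : f i ∉ (↑(S.erase x) : Set V) := havoid i (by omega)
          have h2 : f i ≠ x := by
            intro h
            exact hi0_min i (by omega) ⟨by omega, h⟩
          intro hmem
          refine h1 (by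
            simp only [Finset.coe_erase, Set.mem_diff, Set.mem_singleton_iff]
            exact ⟨hmem, h2⟩)
      constructor
      · obtain ⟨u, h1, h2⟩ := side a b haS' hreach hSepS
        exact ⟨u, h2, h1⟩
      · obtain ⟨u, h1, h2⟩ := side b a hbS' hreach.symm (fun h => hSepS h.symm)
        exact ⟨u, h2, h1⟩
    -- chain construction inside one side
    have mkchain : ∀ (C : Set V) (c : V), (∀ v ∈ C, Reach H ↑S c v) →
        (∀ v, Reach H ↑S c v → v ∈ C) →
        ∀ (z w : V), (∃ u ∈ C, H.Adj z u) → (∃ u ∈ C, H.Adj w u) →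
        ∃ f n, ChainIn H C z w f n := by
      rintro C c hC1 hC2 z w ⟨u, huC, hzu⟩ ⟨t, htC, hwt⟩
      obtain ⟨g, m, hcg, hg0, hgm, hgS⟩ := ((hC1 u huC).symm).trans (hC1 t htC)
      have hgC : ∀ k ≤ m, g k ∈ C := by
        intro k hk
        refine hC2 _ ((hC1 u huC).trans ?_)
        rw [← hg0]
        exact Reach.of_chain hcg hgS hk
      refine ⟨fun k => if k = 0 then z else if k ≤ m + 1 then g (k - 1) else w, m + 2,
        ?_, by simp, by simp [show ¬ (m + 2 = 0) by omega, show ¬ m + 2 ≤ m + 1 by omega], ?_⟩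
      · intro k hk
        by_cases h0 : k = 0
        · subst h0
          simp only [if_pos rfl, if_neg (by omega : ¬ (1:ℕ) = 0), if_pos (by omega : 1 ≤ m + 1)]
          simpa [hg0] using hzu
        · by_cases h1 : k ≤ m
          · simp only [if_neg h0, if_neg (by omega : ¬ k + 1 = 0),
              if_pos (by omega : k ≤ m + 1), if_pos (by omega : k + 1 ≤ m + 1),
              show k + 1 - 1 = (k - 1) + 1 by omega]
            exact hcg (k - 1) (by omega)
          · have hk_eq : k = m + 1 := by omega
            subst hk_eq
            simp only [if_neg h0, if_neg (by omega : ¬ m + 1 + 1 = 0),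
              if_pos (le_refl (m + 1)), if_neg (by omega : ¬ m + 1 + 1 ≤ m + 1),
              show m + 1 - 1 = m by omega, hgm]
            exact hwt.symm
      · intro i hi0 him
        simp only [if_neg (by omega : ¬ i = 0), if_pos (by omega : i ≤ m + 1)]
        exact hgC (i - 1) (by omega)
    -- S is a clique
    have hS_clique : ∀ x ∈ (↑S : Set V), ∀ y ∈ (↑S : Set V), x ≠ y → H.Adj x y := by
      intro x hx y hy hne
      by_contra hnadj2
      have hx' : x ∈ S := hx
      have hy' : y ∈ S := hy
      refine no_two_chains hch hne hnadj2 hA_B_no (fun h => hB_not_S x h hx) ?_ ?_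
      · exact mkchain A a (fun v hv => hv) (fun v hv => hv) x y
          ((hSnbr x hx').1) ((hSnbr y hy').1)
      · exact mkchain B b (fun v hv => hv) (fun v hv => hv) y x
          ((hSnbr y hy').2) ((hSnbr x hx').2)
    -- a simplicial vertex inside a side
    have key : ∀ (C : Set V) (c : V), c ∈ C →
        (∀ v ∈ C, v ∉ (↑S : Set V)) →
        (∀ v ∈ C, ∀ w, H.Adj v w → w ∉ (↑S : Set V) → w ∈ C) →
        (∃ u, u ∉ C ∧ u ∉ (↑S : Set V)) →
        ∃ v ∈ C, Simplicial H v := by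
      rintro C c hcC hCS hclosed ⟨u, huC, huS⟩
      set W : Set V := C ∪ ↑S with hW_def
      have hW_not : u ∉ W := by
        rintro (h | h)
        · exact huC h
        · exact huS h
      have hcardW : Nat.card ↥W ≤ N := by
        have h1 : W ⊂ Set.univ := Set.ssubset_univ_iff.mpr (fun h => hW_not (by rw [h]; trivial))
        have h2 : W.ncard < (Set.univ : Set V).ncard := Set.ncard_lt_ncard h1 Set.finite_univ
        rw [Set.ncard_univ] at h2
        rw [Nat.card_coe_set_eq]
        omega
      have hch1 : Chordal (H.induce W) := chordal_induce hch W
      have hnbrW : ∀ v ∈ C, ∀ w, H.Adj v w → w ∈ W := by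
        intro v hv w hadj
        by_cases h : w ∈ (↑S : Set V)
        · exact Or.inr h
        · exact Or.inl (hclosed v hv w hadj h)
      have transfer : ∀ (z : ↥W), (z : V) ∈ C → Simplicial (H.induce W) z →
          ∃ v ∈ C, Simplicial H v := by
        intro z hzC hz
        refine ⟨z, hzC, ?_⟩
        intro p q hp hq hpq
        have hpW : p ∈ W := hnbrW z hzC p hp
        have hqW : q ∈ W := hnbrW z hzC q hq
        exact hz ⟨p, hpW⟩ ⟨q, hqW⟩ hp hq (by simpa [Subtype.ext_iff] using hpq)
      rcases IH (H.induce W) hcardW hch1 with hcomp1 | ⟨v, w, hvw_ne, hvw_nadj, hv_s, hw_s⟩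
      · refine ⟨c, hcC, ?_⟩
        intro p q hp hq hpq
        have hpW : p ∈ W := hnbrW c hcC p hp
        have hqW : q ∈ W := hnbrW c hcC q hq
        exact hcomp1 ⟨p, hpW⟩ ⟨q, hqW⟩ (by simpa [Subtype.ext_iff] using hpq)
      · have hvw : (v : V) ∈ C ∨ (w : V) ∈ C := by
          by_contra h
          push_neg at h
          have hvS : (v : V) ∈ (↑S : Set V) := v.2.resolve_left h.1
          have hwS : (w : V) ∈ (↑S : Set V) := w.2.resolve_left h.2
          exact hvw_nadj (hS_clique _ hvS _ hwS (fun hh => hvw_ne (Subtype.ext hh)))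
        rcases hvw with h | h
        · exact transfer v h hv_s
        · exact transfer w h hw_s
    obtain ⟨va, hvaA, hva⟩ := key A a haA hA_not_S hA_closed ⟨b, hSepS, hbS'⟩
    obtain ⟨vb, hvbB, hvb⟩ := key B b hbB hB_not_S hB_closed
      ⟨a, fun h => hSepS h.symm, haS'⟩
    exact ⟨va, vb, (hA_B_no va hvaA vb hvbB).1, (hA_B_no va hvaA vb hvbB).2, hva, hvb⟩

theorem exists_simplicial {V : Type u} [Fintype V] [Nonempty V] (H : SimpleGraph V)
    (hch : Chordal H) : ∃ v, Simplicial H v := by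
  rcases dirac_aux (Nat.card V) H le_rfl hch with h | ⟨v, w, -, -, hv, -⟩
  · obtain ⟨v⟩ := ‹Nonempty V›
    exact ⟨v, fun x y _ _ hxy => h x y hxy⟩
  · exact ⟨v, hv⟩

theorem count_aux (s : ℕ) : ∀ N : ℕ, ∀ {V : Type u} [Fintype V] (H : SimpleGraph V),
    Nat.card V ≤ N → Chordal H → H.CliqueFree (s + 2) →
    H.edgeSet.ncard ≤ s * Nat.card V := by
  intro N
  induction N with
  | zero =>
    intro V _ H hcard hch hfree
    have hemp : IsEmpty V := by
      rw [← not_nonempty_iff]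
      intro h
      have : 0 < Nat.card V := Nat.card_pos
      omega
    have he : H.edgeSet = ∅ := by
      ext e
      simp only [Set.mem_empty_iff_false, iff_false]
      induction e with
      | h p q => exact hemp.elim p
    simp [he]
  | succ N IH =>
    intro V _ H hcard hch hfree
    classical
    cases isEmpty_or_nonempty V with
    | inl hemp =>
      have he : H.edgeSet = ∅ := by
        ext e
        simp only [Set.mem_empty_iff_false, iff_false]
        induction e with
        | h p q => exact hemp.elim p
      simp [he]
    | inr hne =>
      obtain ⟨v, hv⟩ := exists_simplicial H hch
      have hdeg : H.degree v ≤ s := by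
        by_contra h
        push_neg at h
        have hcard2 : s + 2 ≤ (insert v (H.neighborFinset v)).card := by
          rw [Finset.card_insert_of_notMem (by simp), H.card_neighborFinset_eq_degree]
          omega
        obtain ⟨t, hts, htc⟩ := Finset.exists_subset_card_eq hcard2
        refine hfree t ⟨?_, htc⟩
        intro p hp q hq hpq
        have hp' := hts hp
        have hq' := hts hq
        simp only [Finset.mem_insert, SimpleGraph.mem_neighborFinset] at hp' hq'
        rcases hp' with rfl | hp' <;> rcases hq' with rfl | hq'
        · exact absurd rfl hpq
        · exact hq'
        · exact hp'.symm
        · exact hv p q hp' hq' hpq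
      set W : Set V := {v}ᶜ with hW_def
      have hcardW : Nat.card ↥W = Nat.card V - 1 := by
        rw [Nat.card_coe_set_eq, hW_def, Set.compl_eq_univ_diff,
          Set.ncard_diff (Set.subset_univ _), Set.ncard_univ, Set.ncard_singleton]
      have hch' : Chordal (H.induce W) := chordal_induce hch W
      have hfree' : (H.induce W).CliqueFree (s + 2) :=
        hfree.comap (SimpleGraph.Embedding.induce W).isContained
      have hcount' := IH (H.induce W) (by omega) hch' hfree'
      have hsub : H.edgeSet ⊆
          (Sym2.map (Subtype.val : ↥W → V)) '' (H.induce W).edgeSet ∪ H.incidenceSet v := by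
        intro e
        induction e with
        | h p q =>
          intro he
          rw [SimpleGraph.mem_edgeSet] at he
          by_cases hm : v = p ∨ v = q
          · right
            exact ⟨he, Sym2.mem_iff.mpr hm⟩
          · left
            push_neg at hm
            refine ⟨s(⟨p, fun h => hm.1 h.symm⟩, ⟨q, fun h => hm.2 h.symm⟩), he, ?_⟩
            rfl
      have hfin1 : ((Sym2.map (Subtype.val : ↥W → V)) '' (H.induce W).edgeSet).Finite :=
        Set.toFinite _
      have hfin2 : (H.incidenceSet v).Finite := Set.toFinite _
      have h1 : H.edgeSet.ncard ≤
          ((Sym2.map (Subtype.val : ↥W → V)) '' (H.induce W).edgeSet).ncard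
            + (H.incidenceSet v).ncard :=
        le_trans (Set.ncard_le_ncard hsub (hfin1.union hfin2)) (Set.ncard_union_le _ _)
      have h2 : ((Sym2.map (Subtype.val : ↥W → V)) '' (H.induce W).edgeSet).ncard
          = (H.induce W).edgeSet.ncard :=
        Set.ncard_image_of_injective _ (Sym2.map.injective Subtype.val_injective)
      have h3 : (H.incidenceSet v).ncard = H.degree v := by
        rw [Set.ncard_eq_toFinset_card', Set.toFinset_card,
          SimpleGraph.card_incidenceSet_eq_degree]
      have hVpos : 1 ≤ Nat.card V := Nat.card_pos
      have hmain : H.edgeSet.ncard ≤ s * (Nat.card V - 1) + s := by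
        rw [h2, h3] at h1
        have := hcount'
        rw [hcardW] at this
        omega
      have hfinal : s * (Nat.card V - 1) + s ≤ s * Nat.card V := by
        obtain ⟨n, hn⟩ : ∃ n, Nat.card V = n + 1 := ⟨Nat.card V - 1, by omega⟩
        rw [hn, Nat.add_sub_cancel, Nat.mul_succ]
      omega

end Stmt18Aux

/-- If a finite graph `G` has no clique on `s + 2` vertices, then every chordal
subgraph `H` of `G` on `n` vertices (where `n` is the number of vertices of `G`)
has at most `s · n` edges. Chordality is expressed as having no induced cycle of
length at least 4. -/
theorem stmt18 {V : Type*} [Fintype V] (G : SimpleGraph V) (s : ℕ) (hs : 0 < s)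
    (hfree : G.CliqueFree (s + 2)) (H : SimpleGraph V) (hHG : H ≤ G)
    (hchordal : ∀ m : ℕ, 4 ≤ m → IsEmpty (SimpleGraph.cycleGraph m ↪g H)) :
    H.edgeSet.ncard ≤ s * Fintype.card V := by
  have := Stmt18Aux.count_aux s (Nat.card V) H le_rfl hchordal
    (SimpleGraph.CliqueFree.anti hHG hfree)
  rwa [Nat.card_eq_fintype_card] at this
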